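/- Let 0 < n < d be integers, Γ ⊂ ℝ^d an n-dimensional Lipschitz graph with Lipschitz constant Λ, μ a finite Borel measure on ℝ^d and M > 0. Suppose {Δ_i}_{i∈I} is a countable family of closed balls Δ_i = B̄(x_i, 5ρ_i) with x_i ∈ Γ such that μ(B(x_i,ρ_i)) ≥ M ρ_i^n for every i. Then for every integer k ≥ 1, H^n(Γ ∩ ∪_{i∈I} B̄(x_i, 5kρ_i)) ≤ C(n,d,Λ) (k+1)^n μ(ℝ^d)/M. In particular this quantity tends to 0 as M → ∞. -/

import Mathlib

open MeasureTheory Metric Set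
open scoped ENNReal NNReal

noncomputable section

/-- `ℝ^d` with the Euclidean metric. -/
abbrev Ed (d : ℕ) := EuclideanSpace ℝ (Fin d)

/-- `L` is an affine `n`-plane in `ℝ^d`. -/
def IsAffinePlane (d n : ℕ) (L : AffineSubspace ℝ (Ed d)) : Prop :=
  (L : Set (Ed d)).Nonempty ∧ Module.finrank ℝ L.direction = n

/-- The coefficient `β_{μ,p}^n(x,r)`. -/
def betaP (d n : ℕ) (p : ℝ) (μ : Measure (Ed d)) (x : Ed d) (r : ℝ) : ℝ :=
  sInf { b : ℝ | ∃ L : AffineSubspace ℝ (Ed d), IsAffinePlane d n L ∧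
    b = (1 / r ^ n *
        ∫ y in closedBall x r, (Metric.infDist y (L : Set (Ed d)) / r) ^ p ∂μ) ^ (1 / p) }

/-- `dist_B(σ,ν)`: sup over ``1``-Lipschitz functions supported in `B` of `|∫ f dσ − ∫ f dν|`. -/
def distB (d : ℕ) (B : Set (Ed d)) (σ ν : Measure (Ed d)) : ℝ :=
  sSup { t : ℝ | ∃ f : Ed d → ℝ, LipschitzWith 1 f ∧ Function.support f ⊆ B ∧
    t = |∫ y, f y ∂σ - ∫ y, f y ∂ν| }

/-- The coefficient `α_μ^n(x,r)`. -/
def alphaC (d n : ℕ) (μ : Measure (Ed d)) (x : Ed d) (r : ℝ) : ℝ :=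
  (1 / r ^ (n + 1)) *
    sInf { t : ℝ | ∃ (a : ℝ≥0) (L : AffineSubspace ℝ (Ed d)), IsAffinePlane d n L ∧
      ((L : Set (Ed d)) ∩ closedBall x r).Nonempty ∧
      t = distB d (closedBall x (3 * r)) μ
            ((a : ℝ≥0∞) • (μH[(n : ℝ)]).restrict (L : Set (Ed d))) }

/-- Jones' square function for the `β_{μ,p}^n` coefficients: `∫₀^∞ β_{μ,p}^n(x,r)² dr/r`. -/
def jonesBeta (d n : ℕ) (p : ℝ) (μ : Measure (Ed d)) (x : Ed d) : ℝ≥0∞ :=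
  ∫⁻ r in Ioi (0 : ℝ), ENNReal.ofReal (betaP d n p μ x r ^ 2 / r)

/-- The square function `∫₀^∞ α_μ^n(x,r)² dr/r`. -/
def jonesAlpha (d n : ℕ) (μ : Measure (Ed d)) (x : Ed d) : ℝ≥0∞ :=
  ∫⁻ r in Ioi (0 : ℝ), ENNReal.ofReal (alphaC d n μ x r ^ 2 / r)

/-- A set `E ⊂ ℝ^d` is `n`-rectifiable. -/
def IsRectifiableSet (d n : ℕ) (E : Set (Ed d)) : Prop :=
  ∃ f : ℕ → EuclideanSpace ℝ (Fin n) → Ed d,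
    (∀ i, ∃ K : ℝ≥0, LipschitzWith K (f i)) ∧
    μH[(n : ℝ)] (E \ ⋃ i, Set.range (f i)) = 0

/-- A measure `μ` on `ℝ^d` is `n`-rectifiable. -/
def IsRectifiableMeasure (d n : ℕ) (μ : Measure (Ed d)) : Prop :=
  ∃ E : Set (Ed d), IsRectifiableSet d n E ∧ μ Eᶜ = 0 ∧
    μ ≪ (μH[(n : ℝ)]).restrict E

/-- The support of a measure: points all whose neighbourhoods have positive measure. -/
def msupport (d : ℕ) (μ : Measure (Ed d)) : Set (Ed d) :=
  { x | ∀ r : ℝ, 0 < r → 0 < μ (ball x r) }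

/-- The (half-open) dyadic cube of sidelength `2^k` determined by `m`. -/
def dyadicCube (d : ℕ) (k : ℤ) (m : Fin d → ℤ) : Set (Ed d) :=
  { y | ∀ i, (m i : ℝ) * 2 ^ k ≤ y i ∧ y i < ((m i : ℝ) + 1) * 2 ^ k }

/-- The center of the dyadic cube. -/
def dyadicCenter (d : ℕ) (k : ℤ) (m : Fin d → ℤ) : Ed d :=
  (WithLp.equiv 2 (Fin d → ℝ)).symm fun i => ((m i : ℝ) + 1 / 2) * 2 ^ k

/-- The cube concentric with the dyadic cube `Q(k,m)`, dilated by the factor `c` (e.g. `3Q`). -/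
def cubeDilate (d : ℕ) (c : ℝ) (k : ℤ) (m : Fin d → ℤ) : Set (Ed d) :=
  (fun y => dyadicCenter d k m + c • (y - dyadicCenter d k m)) '' dyadicCube d k m

/-- The ball `B_Q = B̄(x_Q, 3 diam Q)` associated with a dyadic cube. -/
def ballBQ (d : ℕ) (k : ℤ) (m : Fin d → ℤ) : Set (Ed d) :=
  closedBall (dyadicCenter d k m) (3 * Metric.diam (dyadicCube d k m))

/-- The map `x ↦ (x, A x) ∈ ℝ^n × ℝ^{d-n} = ℝ^d`. -/
def graphMap (d n : ℕ) (A : EuclideanSpace ℝ (Fin n) → EuclideanSpace ℝ (Fin (d - n)))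
    (x : EuclideanSpace ℝ (Fin n)) : Ed d :=
  (WithLp.equiv 2 (Fin d → ℝ)).symm fun i =>
    if h : (i : ℕ) < n then x ⟨i, h⟩ else A x ⟨(i : ℕ) - n, by have := i.isLt; omega⟩

/-- `Γ ⊂ ℝ^d` is the graph of a `Λ`-Lipschitz function `A : ℝ^n → ℝ^{d-n}`. -/
def IsLipschitzGraph (d n : ℕ) (Λ : ℝ≥0) (Γ : Set (Ed d)) : Prop :=
  ∃ A : EuclideanSpace ℝ (Fin n) → EuclideanSpace ℝ (Fin (d - n)),
    LipschitzWith Λ A ∧ Γ = Set.range (graphMap d n A)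

/-- The distance between two subsets of `ℝ^d`. -/
def setDist' (d : ℕ) (s t : Set (Ed d)) : ℝ :=
  sInf { r : ℝ | ∃ p ∈ s, ∃ q ∈ t, r = dist p q }

lemma graphMap_apply (d n : ℕ) (A : EuclideanSpace ℝ (Fin n) → EuclideanSpace ℝ (Fin (d - n)))
    (x : EuclideanSpace ℝ (Fin n)) (i : Fin d) :
    graphMap d n A x i =
      if h : (i : ℕ) < n then x ⟨i, h⟩ else A x ⟨(i : ℕ) - n, by have := i.isLt; omega⟩ := rfl
lemma sum_split (d n : ℕ) (hnd : n ≤ d) (f : Fin d → ℝ) :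
    ∑ i : Fin d, f i =
      (∑ i : Fin n, f (Fin.castLE hnd i)) +
      ∑ j : Fin (d - n), f ⟨n + (j : ℕ), by have := j.isLt; omega⟩ := by
  classical
  set g : Fin (d - n) → Fin d := fun j => ⟨n + (j : ℕ), by have := j.isLt; omega⟩ with hg
  have h1 : Function.Injective (Fin.castLE hnd) := Fin.castLE_injective hnd
  have h2 : Function.Injective g := fun a b h => by
    apply Fin.ext; have := congrArg Fin.val h; simpa [hg] using this
  have huniv : (Finset.univ : Finset (Fin d)) =
      Finset.univ.image (Fin.castLE hnd) ∪ Finset.univ.image g := by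
    ext i
    simp only [Finset.mem_univ, Finset.mem_union, Finset.mem_image, true_iff, true_and]
    by_cases h : (i : ℕ) < n
    · exact Or.inl ⟨⟨i, h⟩, rfl⟩
    · exact Or.inr ⟨⟨(i : ℕ) - n, by have := i.isLt; omega⟩, by
        apply Fin.ext; simp [hg]; omega⟩
  have hdisj : Disjoint (Finset.univ.image (Fin.castLE hnd)) (Finset.univ.image g) := by
    rw [Finset.disjoint_left]
    intro a ha hb
    obtain ⟨i, -, rfl⟩ := Finset.mem_image.mp ha
    obtain ⟨j, -, hj⟩ := Finset.mem_image.mp hb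
    have := congrArg Fin.val hj
    simp [hg] at this
    omega
  rw [huniv, Finset.sum_union hdisj, Finset.sum_image (fun a _ b _ h => h1 h),
    Finset.sum_image (fun a _ b _ h => h2 h)]
lemma graphMap_dist_sq (d n : ℕ) (hnd : n ≤ d)
    (A : EuclideanSpace ℝ (Fin n) → EuclideanSpace ℝ (Fin (d - n)))
    (x y : EuclideanSpace ℝ (Fin n)) :
    dist (graphMap d n A x) (graphMap d n A y) ^ 2 = dist x y ^ 2 + dist (A x) (A y) ^ 2 := by
  have h1 : dist (graphMap d n A x) (graphMap d n A y) ^ 2 =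
      ∑ i : Fin d, dist (graphMap d n A x i) (graphMap d n A y i) ^ 2 := by
    rw [EuclideanSpace.dist_eq, Real.sq_sqrt]
    positivity
  have h2 : dist x y ^ 2 = ∑ i : Fin n, dist (x i) (y i) ^ 2 := by
    rw [EuclideanSpace.dist_eq, Real.sq_sqrt]; positivity
  have h3 : dist (A x) (A y) ^ 2 = ∑ j : Fin (d - n), dist (A x j) (A y j) ^ 2 := by
    rw [EuclideanSpace.dist_eq, Real.sq_sqrt]; positivity
  rw [h1, h2, h3, sum_split d n hnd]
  congr 1
  · apply Finset.sum_congr rfl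
    intro i _
    rw [graphMap_apply, graphMap_apply]
    simp only [Fin.coe_castLE, i.isLt, dif_pos]
  · apply Finset.sum_congr rfl
    intro j _
    rw [graphMap_apply, graphMap_apply]
    have hj : ¬ ((n + (j : ℕ)) < n) := by omega
    simp only [hj, dif_neg, not_false_iff]
    congr 2 <;> exact congrArg _ (Fin.ext (by simp))
lemma hball_le (n : ℕ) (hn : 0 < n) (x : EuclideanSpace ℝ (Fin n)) (r : ℝ) (hr : 0 ≤ r) :
    μH[(n:ℝ)] (closedBall x r) ≤
      ENNReal.ofReal r ^ n * μH[(n:ℝ)] (closedBall (0 : EuclideanSpace ℝ (Fin n)) 1) := by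
  rcases eq_or_lt_of_le hr with h0 | hrpos
  · rw [← h0, closedBall_zero]
    haveI := MeasureTheory.Measure.noAtoms_hausdorff (X := EuclideanSpace ℝ (Fin n)) (d := (n:ℝ)) (by positivity)
    simp
  · set f : EuclideanSpace ℝ (Fin n) → EuclideanSpace ℝ (Fin n) := fun y => x + r • y with hf
    have hlip : LipschitzWith r.toNNReal f := by
      apply LipschitzWith.of_dist_le_mul
      intro a b
      simp only [hf, dist_add_left, dist_smul₀, Real.norm_eq_abs, abs_of_nonneg hr,
        Real.coe_toNNReal _ hr, le_refl]
    have hsub : closedBall x r ⊆ f '' closedBall 0 1 := by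
      intro y hy
      refine ⟨r⁻¹ • (y - x), ?_, ?_⟩
      · simp only [mem_closedBall, dist_zero_right, norm_smul, norm_inv, Real.norm_eq_abs,
          abs_of_nonneg hr]
        rw [inv_mul_le_iff₀ hrpos, mul_one]
        simpa [dist_eq_norm] using mem_closedBall.mp hy
      · simp only [hf, smul_smul, mul_inv_cancel₀ hrpos.ne', one_smul]
        abel
    calc μH[(n:ℝ)] (closedBall x r) ≤ μH[(n:ℝ)] (f '' closedBall 0 1) := measure_mono hsub
      _ ≤ (r.toNNReal : ℝ≥0∞) ^ (n:ℝ) * μH[(n:ℝ)] (closedBall 0 1) :=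
          hlip.hausdorffMeasure_image_le (by positivity) _
      _ = ENNReal.ofReal r ^ n * μH[(n:ℝ)] (closedBall (0 : EuclideanSpace ℝ (Fin n)) 1) := by
          rw [ENNReal.rpow_natCast]; rfl
lemma graphMap_lipschitz (d n : ℕ) (hnd : n ≤ d) (Λ : ℝ≥0)
    (A : EuclideanSpace ℝ (Fin n) → EuclideanSpace ℝ (Fin (d - n)))
    (hA : LipschitzWith Λ A) : LipschitzWith (1 + Λ) (graphMap d n A) := by
  apply LipschitzWith.of_dist_le_mul
  intro x y
  have hsq := graphMap_dist_sq d n hnd A x y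
  have hAd := hA.dist_le_mul x y
  have h1 := dist_nonneg (x := graphMap d n A x) (y := graphMap d n A y)
  have h2 := dist_nonneg (x := x) (y := y)
  have h3 := dist_nonneg (x := A x) (y := A y)
  have hΛ : (0:ℝ) ≤ Λ := Λ.coe_nonneg
  push_cast
  nlinarith [sq_nonneg (dist (A x) (A y) - Λ * dist x y)]
lemma dist_le_graphMap (d n : ℕ) (hnd : n ≤ d)
    (A : EuclideanSpace ℝ (Fin n) → EuclideanSpace ℝ (Fin (d - n)))
    (x y : EuclideanSpace ℝ (Fin n)) :
    dist x y ≤ dist (graphMap d n A x) (graphMap d n A y) := by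
  have hsq := graphMap_dist_sq d n hnd A x y
  have h1 := dist_nonneg (x := graphMap d n A x) (y := graphMap d n A y)
  have h2 := dist_nonneg (x := x) (y := y)
  have h3 := dist_nonneg (x := A x) (y := A y)
  nlinarith
lemma graph_ahlfors (d n : ℕ) (hn : 0 < n) (hnd : n ≤ d) (Λ : ℝ≥0) (Γ : Set (Ed d))
    (hΓ : IsLipschitzGraph d n Λ Γ) (z : Ed d) (hz : z ∈ Γ) (r : ℝ) (hr : 0 ≤ r) :
    μH[(n:ℝ)] (Γ ∩ closedBall z r) ≤
      ((1 + Λ : ℝ≥0) : ℝ≥0∞) ^ n *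
        μH[(n:ℝ)] (closedBall (0 : EuclideanSpace ℝ (Fin n)) 1) *
        ENNReal.ofReal r ^ n := by
  obtain ⟨A, hA, rfl⟩ := hΓ
  obtain ⟨x₀, rfl⟩ := hz
  have hsub : Set.range (graphMap d n A) ∩ closedBall (graphMap d n A x₀) r ⊆
      graphMap d n A '' closedBall x₀ r := by
    rintro w ⟨⟨y, rfl⟩, hw⟩
    exact ⟨y, le_trans (dist_le_graphMap d n hnd A y x₀) (mem_closedBall.mp hw), rfl⟩
  calc μH[(n:ℝ)] (Set.range (graphMap d n A) ∩ closedBall (graphMap d n A x₀) r)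
      ≤ μH[(n:ℝ)] (graphMap d n A '' closedBall x₀ r) := measure_mono hsub
    _ ≤ ((1 + Λ : ℝ≥0) : ℝ≥0∞) ^ (n:ℝ) * μH[(n:ℝ)] (closedBall x₀ r) :=
        (graphMap_lipschitz d n hnd Λ A hA).hausdorffMeasure_image_le (by positivity) _
    _ ≤ ((1 + Λ : ℝ≥0) : ℝ≥0∞) ^ n *
        (ENNReal.ofReal r ^ n * μH[(n:ℝ)] (closedBall (0 : EuclideanSpace ℝ (Fin n)) 1)) := by
        rw [ENNReal.rpow_natCast]
        exact mul_le_mul_right (hball_le n hn x₀ r hr) _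
    _ = _ := by ring
lemma hball_lt_top (n : ℕ) :
    μH[(n:ℝ)] (closedBall (0 : EuclideanSpace ℝ (Fin n)) 1) < ⊤ := by
  have hd : (0:ℝ) ≤ n := by positivity
  have hf := PiLp.antilipschitzWith_ofLp 2 (fun _ : Fin n => ℝ)
  have hsub : closedBall (0 : EuclideanSpace ℝ (Fin n)) 1 ⊆
      (WithLp.equiv 2 (Fin n → ℝ)) ⁻¹' (closedBall (0 : Fin n → ℝ) 1) := by
    intro y hy
    simp only [mem_preimage, mem_closedBall] at *
    have h := (PiLp.lipschitzWith_ofLp 2 (fun _ : Fin n => ℝ)).dist_le_mul y 0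
    simpa using h.trans (by simpa using hy)
  calc μH[(n:ℝ)] (closedBall (0 : EuclideanSpace ℝ (Fin n)) 1)
      ≤ μH[(n:ℝ)] ((WithLp.equiv 2 (Fin n → ℝ)) ⁻¹' (closedBall (0 : Fin n → ℝ) 1)) :=
        measure_mono hsub
    _ ≤ _ ^ (n:ℝ) * μH[(n:ℝ)] (closedBall (0 : Fin n → ℝ) 1) :=
        hf.hausdorffMeasure_preimage_le hd _
    _ < ⊤ := by
        have : (μH[(n:ℝ)] : Measure (Fin n → ℝ)) = volume := by
          simpa using (hausdorffMeasure_pi_real (ι := Fin n))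
        rw [this]
        exact ENNReal.mul_lt_top (ENNReal.rpow_lt_top_of_nonneg hd ENNReal.coe_ne_top) (measure_closedBall_lt_top)

/-- Let `Γ` be an `n`-dimensional Lipschitz graph with constant `Λ`, `μ` a
finite Borel measure, `M > 0`, and `{B̄(x_i,5ρ_i)}_{i∈I}` a countable family of closed balls
centered on `Γ` with `μ(B(x_i,ρ_i)) ≥ M ρ_i^n`. Then for every integer `k ≥ 1`,
`H^n(Γ ∩ ⋃_i B̄(x_i,5kρ_i)) ≤ C(n,d,Λ) (k+1)^n μ(ℝ^d)/M`. -/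
theorem stmt5 (d n : ℕ) (hn : 0 < n) (hnd : n < d) (Λ : ℝ≥0) :
    ∃ C : ℝ≥0, 0 < C ∧
      ∀ Γ : Set (Ed d), IsLipschitzGraph d n Λ Γ →
        ∀ μ : Measure (Ed d), IsFiniteMeasure μ →
          ∀ M : ℝ, 0 < M →
            ∀ (x : ℕ → Ed d) (ρ : ℕ → ℝ) (I : Set ℕ),
              (∀ i ∈ I, x i ∈ Γ) →
              (∀ i ∈ I, ENNReal.ofReal (M * ρ i ^ n) ≤ μ (ball (x i) (ρ i))) →
              ∀ k : ℕ, 1 ≤ k →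
                μH[(n : ℝ)] (Γ ∩ ⋃ i ∈ I, closedBall (x i) (5 * k * ρ i)) ≤
                  (C : ℝ≥0∞) * (k + 1) ^ n * μ Set.univ / ENNReal.ofReal M := by
  have hnd' : n ≤ d := hnd.le
  set H₀ := μH[(n:ℝ)] (closedBall (0 : EuclideanSpace ℝ (Fin n)) 1) with hH₀
  have hH₀top : H₀ ≠ ⊤ := (hball_lt_top n).ne
  refine ⟨(1+Λ)^n * 25^n * (H₀.toNNReal + 1), by positivity, ?_⟩
  intro Γ hΓ μ hμ M hM x ρ I hxΓ hμball k hk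
  set S : Set ℕ := {i ∈ I | 0 ≤ ρ i} with hSdef
  have hUeq : ⋃ i ∈ I, closedBall (x i) (5*k*ρ i) = ⋃ i ∈ S, closedBall (x i) (5*k*ρ i) := by
    apply Subset.antisymm
    · refine iUnion₂_subset fun i hi => ?_
      by_cases h : 0 ≤ ρ i
      · intro w hw
        exact mem_biUnion (show i ∈ S from ⟨hi, h⟩) hw
      · push_neg at h
        rw [closedBall_eq_empty.mpr (by nlinarith [(Nat.one_le_cast (α := ℝ)).mpr hk])]
        exact empty_subset _
    · exact iUnion₂_mono' fun i hi => ⟨i, hi.1, Subset.rfl⟩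
  rw [hUeq]
  set T := (μ univ).toReal / M with hT
  have hrad : ∀ i ∈ S, ρ i ≤ max 1 T := by
    intro i hi
    have h1 : ENNReal.ofReal (M * ρ i ^ n) ≤ μ univ :=
      le_trans (hμball i hi.1) (measure_mono (subset_univ _))
    have h2 : M * ρ i ^ n ≤ (μ univ).toReal :=
      (ENNReal.ofReal_le_iff_le_toReal (measure_ne_top μ _)).mp h1
    have h3 : ρ i ^ n ≤ T := by rw [hT, le_div_iff₀ hM]; nlinarith
    by_cases h4 : ρ i ≤ 1
    · exact le_trans h4 (le_max_left _ _)
    · push_neg at h4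
      exact le_trans (le_self_pow₀ h4.le hn.ne') (le_trans h3 (le_max_right _ _))
  obtain ⟨u, huS, hdisj, hcov⟩ :=
    Vitali.exists_disjoint_subfamily_covering_enlargement_closedBall S x
      (fun i => 5*k*ρ i) (5*k*(max 1 T))
      (fun i hi => mul_le_mul_of_nonneg_left (hrad i hi) (by positivity))
      5 (by norm_num)
  have hcount : u.Countable := u.to_countable
  have hinc : Γ ∩ ⋃ i ∈ S, closedBall (x i) (5*k*ρ i) ⊆
      ⋃ b ∈ u, (Γ ∩ closedBall (x b) (5*(5*k*ρ b))) := by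
    rintro w ⟨hwΓ, hw⟩
    obtain ⟨i, hi, hwi⟩ := mem_iUnion₂.mp hw
    obtain ⟨b, hb, hsub⟩ := hcov i hi
    exact mem_iUnion₂.mpr ⟨b, hb, hwΓ, hsub hwi⟩
  set D : ℝ≥0∞ := ((1+Λ:ℝ≥0):ℝ≥0∞)^n * H₀ * ((25:ℝ≥0∞)*((k:ℝ≥0∞)+1))^n with hD
  have hb1 : ∀ b ∈ u, μH[(n:ℝ)] (Γ ∩ closedBall (x b) (5*(5*k*ρ b))) ≤
      D * (μ (ball (x b) (ρ b)) / ENNReal.ofReal M) := by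
    intro b hb
    have hbS := huS hb
    have hρb : 0 ≤ ρ b := hbS.2
    have h0 : (0:ℝ) ≤ 5*(5*k*ρ b) := by positivity
    refine le_trans (graph_ahlfors d n hn hnd' Λ Γ hΓ (x b) (hxΓ b hbS.1) _ h0) ?_
    have e1 : ENNReal.ofReal (5*(5*k*ρ b)) = ENNReal.ofReal (25*(k:ℝ)) * ENNReal.ofReal (ρ b) := by
      rw [← ENNReal.ofReal_mul (by positivity)]
      ring_nf
    have e2 : ENNReal.ofReal (25*(k:ℝ)) ≤ 25*((k:ℝ≥0∞)+1) := by
      calc ENNReal.ofReal (25*(k:ℝ)) = ((25*k : ℕ) : ℝ≥0∞) := by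
            rw [← ENNReal.ofReal_natCast]; push_cast; ring_nf
        _ ≤ 25*((k:ℝ≥0∞)+1) := by
            push_cast
            gcongr
            simp
    have e3 : ENNReal.ofReal (ρ b) ^ n ≤ μ (ball (x b) (ρ b)) / ENNReal.ofReal M := by
      rw [ENNReal.le_div_iff_mul_le (Or.inl (by simp [hM])) (Or.inl ENNReal.ofReal_ne_top)]
      calc ENNReal.ofReal (ρ b) ^ n * ENNReal.ofReal M = ENNReal.ofReal (M * ρ b ^ n) := by
            rw [← ENNReal.ofReal_pow hρb, ← ENNReal.ofReal_mul (by positivity)]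
            ring_nf
        _ ≤ μ (ball (x b) (ρ b)) := hμball b hbS.1
    calc ((1+Λ:ℝ≥0):ℝ≥0∞)^n * H₀ * ENNReal.ofReal (5*(5*k*ρ b)) ^ n
        = ((1+Λ:ℝ≥0):ℝ≥0∞)^n * H₀ * (ENNReal.ofReal (25*(k:ℝ)) ^ n * ENNReal.ofReal (ρ b) ^ n) := by
          rw [e1, mul_pow]
      _ ≤ ((1+Λ:ℝ≥0):ℝ≥0∞)^n * H₀ *
            ((25*((k:ℝ≥0∞)+1)) ^ n * (μ (ball (x b) (ρ b)) / ENNReal.ofReal M)) := by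
          gcongr
      _ = D * (μ (ball (x b) (ρ b)) / ENNReal.ofReal M) := by rw [hD]; ring
  have hdisj' : u.PairwiseDisjoint (fun b => ball (x b) (ρ b)) := by
    apply hdisj.mono
    intro b
    dsimp only
    by_cases h : 0 ≤ ρ b
    · exact ball_subset_closedBall.trans (closedBall_subset_closedBall
        (by nlinarith [(Nat.one_le_cast (α := ℝ)).mpr hk]))
    · push_neg at h
      rw [ball_eq_empty.mpr h.le]
      exact empty_subset _
  have hsum : ∑' b : u, μ (ball (x b) (ρ b)) ≤ μ univ := by
    rw [← measure_biUnion hcount hdisj' (fun b _ => measurableSet_ball)]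
    exact measure_mono (subset_univ _)
  have hDC : D ≤ ((((1+Λ)^n * 25^n * (H₀.toNNReal + 1) : ℝ≥0)):ℝ≥0∞) * ((k:ℝ≥0∞)+1)^n := by
    have hH : H₀ ≤ ((H₀.toNNReal + 1 : ℝ≥0) : ℝ≥0∞) := by
      push_cast
      rw [← ENNReal.coe_toNNReal hH₀top]
      exact le_self_add
    rw [hD]
    push_cast
    calc ((1+Λ:ℝ≥0):ℝ≥0∞)^n * H₀ * ((25:ℝ≥0∞)*((k:ℝ≥0∞)+1))^n
        ≤ ((1+Λ:ℝ≥0):ℝ≥0∞)^n * ((H₀.toNNReal + 1 : ℝ≥0) : ℝ≥0∞) *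
            ((25:ℝ≥0∞)*((k:ℝ≥0∞)+1))^n := by gcongr
      _ = ((1+Λ:ℝ≥0):ℝ≥0∞)^n * (25:ℝ≥0∞)^n * ((H₀.toNNReal + 1 : ℝ≥0) : ℝ≥0∞) *
            ((k:ℝ≥0∞)+1)^n := by rw [mul_pow]; ring
      _ = _ := by push_cast; ring
  calc μH[(n:ℝ)] (Γ ∩ ⋃ i ∈ S, closedBall (x i) (5*k*ρ i))
      ≤ μH[(n:ℝ)] (⋃ b ∈ u, (Γ ∩ closedBall (x b) (5*(5*k*ρ b)))) := measure_mono hinc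
    _ ≤ ∑' b : u, μH[(n:ℝ)] (Γ ∩ closedBall (x b) (5*(5*k*ρ b))) :=
        measure_biUnion_le _ hcount _
    _ ≤ ∑' b : u, D * (μ (ball (x b) (ρ b)) / ENNReal.ofReal M) :=
        ENNReal.tsum_le_tsum (fun b => hb1 b b.2)
    _ = D * ((∑' b : u, μ (ball (x b) (ρ b))) / ENNReal.ofReal M) := by
        simp only [div_eq_mul_inv, ENNReal.tsum_mul_left, ENNReal.tsum_mul_right, mul_assoc]
    _ ≤ D * (μ univ / ENNReal.ofReal M) := by gcongr
    _ ≤ ((((1+Λ)^n * 25^n * (H₀.toNNReal + 1) : ℝ≥0)):ℝ≥0∞) * ((k:ℝ≥0∞)+1)^n *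
          (μ univ / ENNReal.ofReal M) := by gcongr
    _ = ((((1+Λ)^n * 25^n * (H₀.toNNReal + 1) : ℝ≥0)):ℝ≥0∞) * ((k:ℝ≥0∞)+1)^n *
          μ univ / ENNReal.ofReal M := by rw [mul_div_assoc]


end
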